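/- Let $\mu$ be an exchangeable probability measure on $\{0,1\}^n$, $u_k = \mu(\{X_1=\cdots=X_k=1, X_{k+1}=\cdots=X_n=0\})$, $v_k = \sum_{j=0}^{n-k}\binom{n-k}{j} u_{k+j}$, and define $f(k,l) = \sum_{j=0}^k \binom{k}{j} u_{l-j}$ for $0 \le k \le l \le n$ (so $v_{n-k} = f(k,n)$). Then for every $0 \le k$ with $2k \le n$, the determinant of the $(k+1)\times(k+1)$ matrix $(v_{n-2k+i+j})_{0\le i,j\le k}$ equals the determinant of the $(k+1)\times(k+1)$ matrix $(u_{n-2k+i+j})_{0\le i,j\le k}$. -/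

import Mathlib

open MeasureTheory Matrix

private lemma shift_sum (g : ℕ → ℝ) (i k : ℕ) (hik : i ≤ k) :
    ∑ t ∈ Finset.range (k + 1),
      (if i ≤ t then ((k - i).choose (t - i) : ℝ) else 0) * g t
    = ∑ t ∈ Finset.range (k - i + 1), ((k - i).choose t : ℝ) * g (i + t) := by
  rw [Finset.range_eq_Ico, ← Finset.sum_Ico_consecutive _ (Nat.zero_le i)
    (by omega : i ≤ k + 1)]
  have h1 : ∑ t ∈ Finset.Ico 0 i,
      (if i ≤ t then ((k - i).choose (t - i) : ℝ) else 0) * g t = 0 := by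
    apply Finset.sum_eq_zero
    intro t ht
    rw [Finset.mem_Ico] at ht
    rw [if_neg (by omega), zero_mul]
  rw [h1, zero_add, Finset.sum_Ico_eq_sum_range]
  have h2 : k + 1 - i = k - i + 1 := by omega
  rw [h2]
  apply Finset.sum_congr rfl
  intro t _
  rw [if_pos (by omega), Nat.add_sub_cancel_left]

private lemma key_alg (u : ℕ → ℝ) (m k i j : ℕ) (hi : i ≤ k) (hj : j ≤ k) :
    ∑ s ∈ Finset.range (2 * k - i - j + 1), ((2 * k - i - j).choose s : ℝ) * u (m + i + j + s)
    = ∑ t ∈ Finset.range (k - i + 1), ∑ r ∈ Finset.range (k - j + 1),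
        ((k - i).choose t : ℝ) * ((k - j).choose r : ℝ) * u (m + i + j + t + r) := by
  have hNij : 2 * k - i - j = (k - i) + (k - j) := by omega
  have step1 : ∀ s, (((k - i) + (k - j)).choose s : ℝ) * u (m + i + j + s)
      = ∑ t ∈ Finset.range (s + 1),
          ((k - i).choose t : ℝ) * ((k - j).choose (s - t) : ℝ) * u (m + i + j + s) := by
    intro s
    rw [Nat.add_choose_eq, Finset.Nat.sum_antidiagonal_eq_sum_range_succ_mk]
    push_cast
    rw [Finset.sum_mul]
  rw [hNij]
  set N := (k - i) + (k - j) with hN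
  calc ∑ s ∈ Finset.range (N + 1), ((N).choose s : ℝ) * u (m + i + j + s)
      = ∑ s ∈ Finset.range (N + 1), ∑ t ∈ Finset.range (s + 1),
          ((k - i).choose t : ℝ) * ((k - j).choose (s - t) : ℝ)
            * u (m + i + j + t + (s - t)) := by
        apply Finset.sum_congr rfl
        intro s hs
        rw [step1 s]
        apply Finset.sum_congr rfl
        intro t ht
        rw [Finset.mem_range] at ht
        congr 2
        omega
    _ = ∑ t ∈ Finset.range (N + 1), ∑ r ∈ Finset.range (N + 1 - t),
          ((k - i).choose t : ℝ) * ((k - j).choose r : ℝ) * u (m + i + j + t + r) :=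
        Finset.sum_range_diag_flip (N + 1)
          (fun t r => ((k - i).choose t : ℝ) * ((k - j).choose r : ℝ) * u (m + i + j + t + r))
    _ = ∑ t ∈ Finset.range (k - i + 1), ∑ r ∈ Finset.range (N + 1 - t),
          ((k - i).choose t : ℝ) * ((k - j).choose r : ℝ) * u (m + i + j + t + r) := by
        symm
        apply Finset.sum_subset
        · apply Finset.range_subset_range.2
          rw [hN]; omega
        · intro t _ ht
          rw [Finset.mem_range, not_lt] at ht
          apply Finset.sum_eq_zero
          intro r _
          rw [Nat.choose_eq_zero_of_lt (show k - i < t by omega)]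
          push_cast; ring
    _ = ∑ t ∈ Finset.range (k - i + 1), ∑ r ∈ Finset.range (k - j + 1),
          ((k - i).choose t : ℝ) * ((k - j).choose r : ℝ) * u (m + i + j + t + r) := by
        apply Finset.sum_congr rfl
        intro t ht
        rw [Finset.mem_range] at ht
        symm
        apply Finset.sum_subset
        · apply Finset.range_subset_range.2
          rw [hN]; omega
        · intro r _ hr
          rw [Finset.mem_range, not_lt] at hr
          rw [Nat.choose_eq_zero_of_lt (show k - j < r by omega)]
          push_cast; ring

private lemma key2 (u : ℕ → ℝ) (m k i j : ℕ) (hi : i ≤ k) (hj : j ≤ k) :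
    ∑ b ∈ Finset.range (k + 1),
      (if j ≤ b then ((k - j).choose (b - j) : ℝ) else 0) *
        (∑ a ∈ Finset.range (k + 1),
          (if i ≤ a then ((k - i).choose (a - i) : ℝ) else 0) * u (m + a + b))
    = ∑ t ∈ Finset.range (k - i + 1), ∑ r ∈ Finset.range (k - j + 1),
        ((k - i).choose t : ℝ) * ((k - j).choose r : ℝ) * u (m + i + j + t + r) := by
  rw [shift_sum (fun b => ∑ a ∈ Finset.range (k + 1),
    (if i ≤ a then ((k - i).choose (a - i) : ℝ) else 0) * u (m + a + b)) j k hj]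
  have hinner : ∀ r, ∑ a ∈ Finset.range (k + 1),
      (if i ≤ a then ((k - i).choose (a - i) : ℝ) else 0) * u (m + a + (j + r))
      = ∑ t ∈ Finset.range (k - i + 1), ((k - i).choose t : ℝ) * u (m + (i + t) + (j + r)) :=
    fun r => shift_sum (fun a => u (m + a + (j + r))) i k hi
  simp only [hinner, Finset.mul_sum]
  rw [Finset.sum_comm]
  apply Finset.sum_congr rfl
  intro t _
  apply Finset.sum_congr rfl
  intro r _
  have h3 : m + (i + t) + (j + r) = m + i + j + t + r := by omega
  rw [h3]
  ring

theorem stmt_8 (n : ℕ) (hn : 1 ≤ n)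
    (μ : Measure (Fin n → Bool)) [IsProbabilityMeasure μ]
    (hexch : ∀ π : Equiv.Perm (Fin n), Measure.map (fun f => f ∘ π) μ = μ)
    (u v : ℕ → ℝ)
    (hu : ∀ k, u k = (μ {f | ∀ i : Fin n, (f i = true ↔ (i : ℕ) < k)}).toReal)
    (hv : ∀ k ≤ n, v k = ∑ j ∈ Finset.range (n - k + 1), ((n - k).choose j : ℝ) * u (k + j))
    (k : ℕ) (hkn : 2 * k ≤ n) :
    (Matrix.of fun i j : Fin (k + 1) =>
        v (n - 2 * k + (i : ℕ) + (j : ℕ))).det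
      = (Matrix.of fun i j : Fin (k + 1) =>
        u (n - 2 * k + (i : ℕ) + (j : ℕ))).det := by
  set m := n - 2 * k with hm
  set P : Matrix (Fin (k + 1)) (Fin (k + 1)) ℝ :=
    Matrix.of (fun i a : Fin (k + 1) =>
      if (i : ℕ) ≤ (a : ℕ) then ((k - (i : ℕ)).choose ((a : ℕ) - (i : ℕ)) : ℝ) else 0) with hP
  set U : Matrix (Fin (k + 1)) (Fin (k + 1)) ℝ :=
    Matrix.of (fun i j : Fin (k + 1) => u (m + (i : ℕ) + (j : ℕ))) with hU
  have hPtri : P.BlockTriangular id := by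
    intro i a ha
    simp only [id] at ha
    simp only [hP, Matrix.of_apply]
    rw [if_neg (by exact_mod_cast not_le.2 ha)]
  have hPdet : P.det = 1 := by
    rw [Matrix.det_of_upperTriangular hPtri]
    apply Finset.prod_eq_one
    intro i _
    simp [hP]
  have hMain : (Matrix.of fun i j : Fin (k + 1) =>
      v (m + (i : ℕ) + (j : ℕ))) = P * U * Pᵀ := by
    ext i j
    have hi : (i : ℕ) ≤ k := by have := i.isLt; omega
    have hj : (j : ℕ) ≤ k := by have := j.isLt; omega
    have hij : m + (i : ℕ) + (j : ℕ) ≤ n := by rw [hm]; omega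
    have hsub : n - (m + (i : ℕ) + (j : ℕ)) = 2 * k - (i : ℕ) - (j : ℕ) := by rw [hm]; omega
    simp only [Matrix.mul_apply, Matrix.transpose_apply, Matrix.of_apply, hP, hU]
    rw [hv _ hij, hsub, key_alg u m k i j hi hj, ← key2 u m k i j hi hj]
    rw [← Fin.sum_univ_eq_sum_range (fun b =>
      (if (j : ℕ) ≤ b then ((k - (j : ℕ)).choose (b - (j : ℕ)) : ℝ) else 0) *
        ∑ a ∈ Finset.range (k + 1),
          (if (i : ℕ) ≤ a then ((k - (i : ℕ)).choose (a - (i : ℕ)) : ℝ) else 0)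
            * u (m + a + b)) (k + 1)]
    apply Finset.sum_congr rfl
    intro b _
    rw [← Fin.sum_univ_eq_sum_range (fun a =>
      (if (i : ℕ) ≤ a then ((k - (i : ℕ)).choose (a - (i : ℕ)) : ℝ) else 0)
        * u (m + a + (b : ℕ))) (k + 1)]
    rw [mul_comm]
  calc (Matrix.of fun i j : Fin (k + 1) => v (m + (i : ℕ) + (j : ℕ))).det
      = (P * U * Pᵀ).det := by rw [hMain]
    _ = P.det * U.det * Pᵀ.det := by rw [Matrix.det_mul, Matrix.det_mul]
    _ = U.det := by rw [Matrix.det_transpose, hPdet]; ring
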